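/- arXiv:1806.02803 — 4 statements merged into one kernel-verified Lean document; each statement's English description precedes it below -/
import Mathlib

section
/- Let V ≥ 1, N ≥ 0 and let β ∈ (0,1) satisfy the β-condition. Let a and a′ be count vectors. If there exists n ∈ {0,…,N} such that a′_n ≤ a_n − 1 and a′_k ≤ a_k for all k < n, then ∑_{k=0}^{N} β^k a′_k < ∑_{k=0}^{N} β^k a_k. In words: losing one chunk at quality level n cannot be compensated by any gains at quality levels above n. -/
/-- Under the β-condition, losing one chunk at quality level `n`
cannot be compensated by any gains at quality levels above `n`. -/
theorem fastscan_level_loss (V N : ℕ) (hV : 1 ≤ V) (β : ℝ)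
    (hβ0 : 0 < β) (hβ1 : β < 1)
    (hbeta : ∀ n ≤ N, (V : ℝ) * ∑ k ∈ Finset.Ico (n + 1) (N + 1), β ^ k < β ^ n)
    (a a' : ℕ → ℕ)
    (ha : ∀ k ≤ N, a k ≤ V) (ha' : ∀ k ≤ N, a' k ≤ V)
    (h : ∃ n ≤ N, a' n + 1 ≤ a n ∧ ∀ k < n, a' k ≤ a k) :
    ∑ k ∈ Finset.range (N + 1), β ^ k * (a' k : ℝ) <
      ∑ k ∈ Finset.range (N + 1), β ^ k * (a k : ℝ) := by
  obtain ⟨n, hnN, han, hlow⟩ := h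
  have hsplit : ∀ b : ℕ → ℝ, ∑ k ∈ Finset.range (N + 1), β ^ k * b k
      = (∑ k ∈ Finset.range n, β ^ k * b k) + β ^ n * b n
        + ∑ k ∈ Finset.Ico (n + 1) (N + 1), β ^ k * b k := by
    intro b
    rw [Finset.range_eq_Ico,
        ← Finset.sum_Ico_consecutive (fun k => β ^ k * b k) (Nat.zero_le n)
          (Nat.le_succ_of_le hnN),
        ← Finset.sum_Ico_consecutive (fun k => β ^ k * b k) (Nat.le_succ n)
          (Nat.succ_le_succ hnN),
        Nat.Ico_succ_singleton, Finset.sum_singleton, Nat.succ_eq_add_one]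
    simp only [Finset.range_eq_Ico, Nat.succ_eq_add_one]
    ring
  rw [hsplit, hsplit]
  have h1 : ∑ k ∈ Finset.range n, β ^ k * (a' k : ℝ)
      ≤ ∑ k ∈ Finset.range n, β ^ k * (a k : ℝ) := by
    refine Finset.sum_le_sum fun k hk => ?_
    have := hlow k (Finset.mem_range.mp hk)
    exact mul_le_mul_of_nonneg_left (by exact_mod_cast this) (pow_nonneg hβ0.le k)
  have h2 : β ^ n * (a' n : ℝ) ≤ β ^ n * (a n : ℝ) - β ^ n := by
    have hc : (a' n : ℝ) + 1 ≤ (a n : ℝ) := by exact_mod_cast han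
    nlinarith [pow_pos hβ0 n]
  have h3 : ∑ k ∈ Finset.Ico (n + 1) (N + 1), β ^ k * (a' k : ℝ)
      ≤ (V : ℝ) * ∑ k ∈ Finset.Ico (n + 1) (N + 1), β ^ k := by
    rw [Finset.mul_sum]
    refine Finset.sum_le_sum fun k hk => ?_
    have hkN : k ≤ N := Nat.lt_succ_iff.mp (Finset.mem_Ico.mp hk).2
    have : (a' k : ℝ) ≤ V := by exact_mod_cast ha' k hkN
    calc β ^ k * (a' k : ℝ) ≤ β ^ k * V :=
          mul_le_mul_of_nonneg_left this (pow_nonneg hβ0.le k)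
      _ = (V : ℝ) * β ^ k := by ring
  have h4 := hbeta n hnN
  have h5 : (0 : ℝ) ≤ ∑ k ∈ Finset.Ico (n + 1) (N + 1), β ^ k * (a k : ℝ) :=
    Finset.sum_nonneg fun k _ => mul_nonneg (pow_nonneg hβ0.le k) (Nat.cast_nonneg _)
  linarith
end

section
/- Let V ≥ 1, N ≥ 0 and let β ∈ (0,1) satisfy the β-condition. For any two distinct count vectors a and b, ∑_{k=0}^{N} β^k a_k > ∑_{k=0}^{N} β^k b_k if and only if a >_lex b. Hence on count vectors the β-weighted sum ∑_{k=0}^{N} β^k a_k induces exactly the lexicographic order in which lower quality levels are more significant. -/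
lemma fastscan_key (V N n : ℕ) (β : ℝ) (hβ0 : 0 < β)
    (hbeta : (V : ℝ) * ∑ k ∈ Finset.Ico (n + 1) (N + 1), β ^ k < β ^ n)
    (a b : ℕ → ℕ) (hb : ∀ k ≤ N, b k ≤ V)
    (hn : n ≤ N) (hlt : b n < a n) (hagree : ∀ k < n, a k = b k) :
    ∑ k ∈ Finset.range (N + 1), β ^ k * (b k : ℝ) <
      ∑ k ∈ Finset.range (N + 1), β ^ k * (a k : ℝ) := by
  rw [← sub_pos, ← Finset.sum_sub_distrib]
  simp_rw [← mul_sub]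
  rw [Finset.range_eq_Ico,
    ← Finset.sum_Ico_consecutive _ (Nat.zero_le n) (by omega : n ≤ N + 1),
    ← Finset.sum_Ico_consecutive _ (Nat.le_succ n) (by omega : n + 1 ≤ N + 1)]
  have hz : ∑ k ∈ Finset.Ico 0 n, β ^ k * ((a k : ℝ) - b k) = 0 := by
    apply Finset.sum_eq_zero
    intro k hk
    simp only [Finset.mem_Ico] at hk
    rw [hagree k hk.2]; ring
  have hsing : ∑ k ∈ Finset.Ico n (n + 1), β ^ k * ((a k : ℝ) - b k)
      = β ^ n * ((a n : ℝ) - b n) := by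
    rw [Nat.Ico_succ_singleton, Finset.sum_singleton]
  rw [hz, zero_add, hsing]
  have htail : -((V : ℝ) * ∑ k ∈ Finset.Ico (n + 1) (N + 1), β ^ k) ≤
      ∑ k ∈ Finset.Ico (n + 1) (N + 1), β ^ k * ((a k : ℝ) - b k) := by
    rw [Finset.mul_sum, ← Finset.sum_neg_distrib]
    apply Finset.sum_le_sum
    intro k hk
    simp only [Finset.mem_Ico] at hk
    have hbk : (b k : ℝ) ≤ V := by exact_mod_cast hb k (by omega)
    have hak : (0 : ℝ) ≤ a k := Nat.cast_nonneg _
    have hβk : (0 : ℝ) ≤ β ^ k := le_of_lt (pow_pos hβ0 k)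
    nlinarith
  have h1 : (1 : ℝ) ≤ (a n : ℝ) - b n := by
    have : b n + 1 ≤ a n := hlt
    have := Nat.cast_le (α := ℝ).mpr this
    push_cast at this
    linarith
  have hpow : (0 : ℝ) < β ^ n := pow_pos hβ0 n
  nlinarith

/-- Under the β-condition, for distinct count vectors the
β-weighted sum induces exactly the lexicographic order in which lower quality
levels are more significant. -/
theorem fastscan_lex_order (V N : ℕ) (hV : 1 ≤ V) (β : ℝ)
    (hβ0 : 0 < β) (hβ1 : β < 1)
    (hbeta : ∀ n ≤ N, (V : ℝ) * ∑ k ∈ Finset.Ico (n + 1) (N + 1), β ^ k < β ^ n)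
    (a b : ℕ → ℕ)
    (ha : ∀ k ≤ N, a k ≤ V) (hb : ∀ k ≤ N, b k ≤ V)
    (hne : ∃ k ≤ N, a k ≠ b k) :
    (∑ k ∈ Finset.range (N + 1), β ^ k * (a k : ℝ) >
        ∑ k ∈ Finset.range (N + 1), β ^ k * (b k : ℝ)) ↔
      (∃ n ≤ N, b n < a n ∧ ∀ k < n, a k = b k) := by
  constructor
  · intro hsum
    obtain ⟨k₀, hk₀, hk₀ne⟩ := hne
    have hex : ∃ k, k ≤ N ∧ a k ≠ b k := ⟨k₀, hk₀, hk₀ne⟩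
    classical
    let n := Nat.find hex
    obtain ⟨hnN, hnne⟩ := Nat.find_spec hex
    have hagree : ∀ k < n, a k = b k := by
      intro k hk
      by_contra hne'
      exact Nat.find_min hex hk ⟨by omega, hne'⟩
    rcases lt_trichotomy (a n) (b n) with h | h | h
    · exfalso
      have hagree' : ∀ k < n, b k = a k := fun k hk => (hagree k hk).symm
      have := fastscan_key V N n β hβ0 (hbeta n hnN) b a ha hnN h hagree'
      linarith [hsum]
    · exact absurd h hnne
    · exact ⟨n, hnN, h, hagree⟩
  · rintro ⟨n, hnN, hlt, hagree⟩
    exact fastscan_key V N n β hβ0 (hbeta n hnN) a b hb hnN hlt hagree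
end

section
/- Let V ≥ 1, N ≥ 0, let β ∈ (0,1) satisfy the β-condition, and let λ > V · ∑_{n=0}^{N} β^n. Let F be a nonempty finite set of pairs (a,d), where a is a count vector and d ∈ ℕ is a stall duration. Then a pair (a*,d*) ∈ F maximizes the objective f over F if and only if it is sequentially optimal, i.e., d* ≤ d for every (a,d) ∈ F, and a ≤_lex a* for every (a,d) ∈ F with d = d*. In words: maximizing the objective over any finite feasible set is equivalent to first minimizing the stall duration and then lexicographically maximizing the per-level quality counts, processing quality levels in increasing order. -/

lemma fastscan_lex_sum_lt (V N : ℕ) (β : ℝ) (hβ0 : 0 < β)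
    (hbeta : ∀ n ≤ N, (V : ℝ) * ∑ k ∈ Finset.Ico (n + 1) (N + 1), β ^ k < β ^ n)
    (a b : ℕ → ℕ) (hb : ∀ k ≤ N, b k ≤ V)
    (n : ℕ) (hn : n ≤ N) (hlt : b n < a n) (heq : ∀ k < n, b k = a k) :
    ∑ k ∈ Finset.range (N + 1), β ^ k * (b k : ℝ) <
      ∑ k ∈ Finset.range (N + 1), β ^ k * (a k : ℝ) := by
  have hsplit : ∀ x : ℕ → ℕ,
      ∑ k ∈ Finset.range (N + 1), β ^ k * (x k : ℝ) =
        (∑ k ∈ Finset.range n, β ^ k * (x k : ℝ)) + β ^ n * (x n : ℝ)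
          + ∑ k ∈ Finset.Ico (n + 1) (N + 1), β ^ k * (x k : ℝ) := by
    intro x
    rw [Finset.range_eq_Ico, Finset.range_eq_Ico,
      ← Finset.sum_Ico_consecutive _ (Nat.zero_le n) (by omega : n ≤ N + 1),
      Finset.sum_eq_sum_Ico_succ_bot (by omega : n < N + 1)]
    ring
  rw [hsplit a, hsplit b]
  have hfirst : ∑ k ∈ Finset.range n, β ^ k * (b k : ℝ)
      = ∑ k ∈ Finset.range n, β ^ k * (a k : ℝ) := by
    refine Finset.sum_congr rfl fun k hk => ?_
    rw [heq k (Finset.mem_range.mp hk)]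
  have htailb : ∑ k ∈ Finset.Ico (n + 1) (N + 1), β ^ k * (b k : ℝ) ≤
      (V : ℝ) * ∑ k ∈ Finset.Ico (n + 1) (N + 1), β ^ k := by
    rw [Finset.mul_sum]
    refine Finset.sum_le_sum fun k hk => ?_
    have hkN : k ≤ N := by have := Finset.mem_Ico.mp hk; omega
    have : (b k : ℝ) ≤ V := by exact_mod_cast hb k hkN
    have hp : (0:ℝ) ≤ β ^ k := le_of_lt (pow_pos hβ0 k)
    nlinarith
  have htaila : 0 ≤ ∑ k ∈ Finset.Ico (n + 1) (N + 1), β ^ k * (a k : ℝ) := by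
    refine Finset.sum_nonneg fun k _ => ?_
    positivity
  have hmid : β ^ n * (b n : ℝ) ≤ β ^ n * (a n : ℝ) - β ^ n := by
    have : (b n : ℝ) + 1 ≤ a n := by exact_mod_cast hlt
    have hp : (0:ℝ) < β ^ n := pow_pos hβ0 n
    nlinarith
  have := hbeta n hn
  linarith

/-- Under the β-condition and `λ > V · ∑_{n=0}^{N} β^n`,
maximizing the objective `f(a,d) = ∑_{n=0}^{N} β^n a_n − λ d` over any
nonempty finite feasible set is equivalent to first minimizing the stall
duration and then lexicographically maximizing the per-level quality counts. -/
theorem fastscan_sequential_optimality (V N : ℕ) (hV : 1 ≤ V) (β lam : ℝ)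
    (hβ0 : 0 < β) (hβ1 : β < 1)
    (hbeta : ∀ n ≤ N, (V : ℝ) * ∑ k ∈ Finset.Ico (n + 1) (N + 1), β ^ k < β ^ n)
    (hlam : lam > (V : ℝ) * ∑ n ∈ Finset.range (N + 1), β ^ n)
    (F : Finset ((ℕ → ℕ) × ℕ)) (hF : F.Nonempty)
    (hcount : ∀ p ∈ F, ∀ k ≤ N, p.1 k ≤ V)
    (astar : ℕ → ℕ) (dstar : ℕ) (hmem : (astar, dstar) ∈ F) :
    (∀ p ∈ F,
        ∑ n ∈ Finset.range (N + 1), β ^ n * (p.1 n : ℝ) - lam * (p.2 : ℝ) ≤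
          ∑ n ∈ Finset.range (N + 1), β ^ n * (astar n : ℝ) - lam * (dstar : ℝ)) ↔
      ((∀ p ∈ F, dstar ≤ p.2) ∧
        ∀ p ∈ F, p.2 = dstar →
          ((∀ k ≤ N, p.1 k = astar k) ∨
            ∃ n ≤ N, p.1 n < astar n ∧ ∀ k < n, p.1 k = astar k)) := by
  have hS0 : ∀ x : ℕ → ℕ, 0 ≤ ∑ k ∈ Finset.range (N + 1), β ^ k * (x k : ℝ) := by
    intro x
    refine Finset.sum_nonneg fun k _ => ?_
    positivity
  have hSle : ∀ x : ℕ → ℕ, (∀ k ≤ N, x k ≤ V) →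
      ∑ k ∈ Finset.range (N + 1), β ^ k * (x k : ℝ) ≤
        (V : ℝ) * ∑ k ∈ Finset.range (N + 1), β ^ k := by
    intro x hx
    rw [Finset.mul_sum]
    refine Finset.sum_le_sum fun k hk => ?_
    have hkN : k ≤ N := by have := Finset.mem_range.mp hk; omega
    have : (x k : ℝ) ≤ V := by exact_mod_cast hx k hkN
    have hp : (0:ℝ) ≤ β ^ k := le_of_lt (pow_pos hβ0 k)
    nlinarith
  have hlam0 : 0 < lam := lt_of_le_of_lt (by positivity) hlam
  constructor
  · intro hmax
    constructor
    · intro p hp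
      by_contra h
      push_neg at h
      have hle := hmax p hp
      have h1 : (p.2 : ℝ) + 1 ≤ dstar := by exact_mod_cast h
      have h2 := hS0 p.1
      have h3 := hSle astar (hcount _ hmem)
      nlinarith
    · intro p hp hpd
      by_cases hall : ∀ k ≤ N, p.1 k = astar k
      · exact Or.inl hall
      right
      push_neg at hall
      have hex : ∃ k, k ≤ N ∧ p.1 k ≠ astar k := hall
      classical
      let n := Nat.find hex
      have hnspec := Nat.find_spec hex
      have hmin : ∀ k < n, p.1 k = astar k := by
        intro k hk
        have := Nat.find_min hex hk
        push_neg at this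
        by_contra hne
        exact hne (by
          by_contra hne2
          exact hne2 (this (by
            have : k < n := hk
            have hnN := hnspec.1
            omega)))
      rcases lt_or_gt_of_ne hnspec.2 with h | h
      · exact ⟨n, hnspec.1, h, hmin⟩
      · exfalso
        have := fastscan_lex_sum_lt V N β hβ0 hbeta p.1 astar
          (hcount _ hmem) n hnspec.1 h (fun k hk => (hmin k hk).symm)
        have hle := hmax p hp
        rw [hpd] at hle
        linarith
  · rintro ⟨hd, hlex⟩ p hp
    rcases lt_or_eq_of_le (hd p hp) with h | h
    · have h1 : (dstar : ℝ) + 1 ≤ p.2 := by exact_mod_cast h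
      have h2 := hS0 astar
      have h3 := hSle p.1 (hcount _ hp)
      nlinarith
    · rcases hlex p hp h.symm with hall | ⟨n, hnN, hlt, heq⟩
      · have : ∑ k ∈ Finset.range (N + 1), β ^ k * (p.1 k : ℝ)
            = ∑ k ∈ Finset.range (N + 1), β ^ k * (astar k : ℝ) := by
          refine Finset.sum_congr rfl fun k hk => ?_
          rw [hall k (by have := Finset.mem_range.mp hk; omega)]
        rw [this, ← h]
      · have := fastscan_lex_sum_lt V N β hβ0 hbeta astar p.1
          (hcount _ hp) n hnN hlt heq
        rw [← h]
        linarith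
end

section
/- Let V ≥ 1, N ≥ 0 and let β ∈ (0,1) satisfy the β-condition. Fix n ∈ {0,…,N} and let a be the count vector with a_k = V for all k ≤ n and a_k = 0 for all k > n (all V chunks fetched exactly at quality level n). Then for every count vector a′ with a′_n < V, ∑_{k=0}^{N} β^k a′_k < ∑_{k=0}^{N} β^k a_k. In words: the objective prefers pushing all chunks to quality level n over any choice that pushes some chunks above level n at the cost of dropping at least one chunk below level n. -/
/-- Under the β-condition, the objective prefers pushing all `V`
chunks exactly to quality level `n` over any choice whose count at level `n`
is below `V`. -/
theorem fastscan_prefers_uniform_level (V N : ℕ) (hV : 1 ≤ V) (β : ℝ)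
    (hβ0 : 0 < β) (hβ1 : β < 1)
    (hbeta : ∀ n ≤ N, (V : ℝ) * ∑ k ∈ Finset.Ico (n + 1) (N + 1), β ^ k < β ^ n)
    (n : ℕ) (hn : n ≤ N)
    (a : ℕ → ℕ) (hadef : ∀ k ≤ N, a k = if k ≤ n then V else 0)
    (a' : ℕ → ℕ) (ha' : ∀ k ≤ N, a' k ≤ V)
    (h : a' n < V) :
    ∑ k ∈ Finset.range (N + 1), β ^ k * (a' k : ℝ) <
      ∑ k ∈ Finset.range (N + 1), β ^ k * (a k : ℝ) := by
  have hsplit : ∀ (f : ℕ → ℝ), ∑ k ∈ Finset.range (N+1), f k =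
      ∑ k ∈ Finset.range (n+1), f k + ∑ k ∈ Finset.Ico (n+1) (N+1), f k := by
    intro f
    rw [Finset.range_eq_Ico,
      ← Finset.sum_Ico_consecutive f (Nat.zero_le _) (by omega : n + 1 ≤ N + 1), Finset.range_eq_Ico]
  rw [hsplit, hsplit]
  have hRa : ∑ k ∈ Finset.Ico (n+1) (N+1), β ^ k * (a k : ℝ) = 0 := by
    apply Finset.sum_eq_zero
    intro k hk
    simp only [Finset.mem_Ico] at hk
    rw [hadef k (by omega), if_neg (by omega)]
    simp
  rw [hRa, add_zero]
  have hRv : ∑ k ∈ Finset.range (n+1), β ^ k * (a k : ℝ) =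
      ∑ k ∈ Finset.range (n+1), β ^ k * (V : ℝ) := by
    apply Finset.sum_congr rfl
    intro k hk
    simp only [Finset.mem_range] at hk
    rw [hadef k (by omega), if_pos (by omega)]
  rw [hRv]
  have h1 : ∑ k ∈ Finset.range (n+1), β ^ k * (a' k : ℝ) ≤
      ∑ k ∈ Finset.range (n+1), β ^ k * (V : ℝ) - β ^ n := by
    rw [Finset.sum_range_succ, Finset.sum_range_succ]
    have hc : (a' n : ℝ) + 1 ≤ (V : ℝ) := by exact_mod_cast h
    have hterm : β ^ n * (a' n : ℝ) ≤ β ^ n * (V : ℝ) - β ^ n := by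
      nlinarith [pow_pos hβ0 n]
    have hrest : ∑ k ∈ Finset.range n, β ^ k * (a' k : ℝ) ≤
        ∑ k ∈ Finset.range n, β ^ k * (V : ℝ) := by
      apply Finset.sum_le_sum
      intro k hk
      simp only [Finset.mem_range] at hk
      have hle : (a' k : ℝ) ≤ (V : ℝ) := Nat.cast_le.mpr (ha' k (by omega))
      nlinarith [pow_pos hβ0 k]
    linarith
  have h2 : ∑ k ∈ Finset.Ico (n+1) (N+1), β ^ k * (a' k : ℝ) < β ^ n := by
    calc ∑ k ∈ Finset.Ico (n+1) (N+1), β ^ k * (a' k : ℝ)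
        ≤ ∑ k ∈ Finset.Ico (n+1) (N+1), β ^ k * (V : ℝ) := by
          apply Finset.sum_le_sum
          intro k hk
          simp only [Finset.mem_Ico] at hk
          have hle : (a' k : ℝ) ≤ (V : ℝ) := Nat.cast_le.mpr (ha' k (by omega))
          nlinarith [pow_pos hβ0 k]
      _ = (V:ℝ) * ∑ k ∈ Finset.Ico (n+1) (N+1), β ^ k := by
          rw [Finset.mul_sum]; apply Finset.sum_congr rfl; intros; ring
      _ < β ^ n := hbeta n hn
  linarith
end
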